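/- Let ρ be a density matrix, σ a positive semidefinite matrix of the same size, and let ε, ε' be reals with ε > ε' ≥ 0 and ε ≤ 1. Then D_H^ε(ρ‖σ) ≤ D_max^{ε'}(ρ‖σ) + log₂(ε/(ε − ε')). -/

import Mathlib

open scoped BigOperators ComplexOrder
open Matrix Filter MeasureTheory

noncomputable section

namespace QMarkov

variable {ι : Type*}

/-- Positive semidefinite square root of a matrix (junk value `0` if not PSD). -/
noncomputable def matSqrt [Fintype ι] (A : Matrix ι ι ℂ) : Matrix ι ι ℂ := by
  classical exact if h : A.PosSemidef then
      (h.1.eigenvectorUnitary : Matrix ι ι ℂ) *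
        Matrix.diagonal ((↑) ∘ Real.sqrt ∘ h.1.eigenvalues) *
        (star h.1.eigenvectorUnitary : Matrix ι ι ℂ)
    else 0

/-- Trace norm (sum of singular values). -/
noncomputable def traceNorm [Fintype ι] (A : Matrix ι ι ℂ) : ℝ :=
  (matSqrt (Aᴴ * A)).trace.re

/-- Fidelity `F(ρ,σ) = ‖√ρ √σ‖₁`. -/
noncomputable def fid [Fintype ι] (ρ σ : Matrix ι ι ℂ) : ℝ :=
  traceNorm (matSqrt ρ * matSqrt σ)

/-- Generalized trace distance `Δ(ρ,σ) = ½‖ρ-σ‖₁ + ½|tr(ρ-σ)|`. -/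
noncomputable def tdist [Fintype ι] (ρ σ : Matrix ι ι ℂ) : ℝ :=
  (1 / 2) * traceNorm (ρ - σ) + (1 / 2) * ‖(ρ - σ).trace‖

/-- Von Neumann entropy `H(ρ) = -∑ᵢ λᵢ log₂ λᵢ` (junk `0` if not Hermitian);
the convention `0 · log₂ 0 = 0` is automatic since `Real.logb 2 0 = 0`. -/
noncomputable def vnEntropy [Fintype ι] (A : Matrix ι ι ℂ) : ℝ := by
  classical exact
    if h : A.IsHermitian then -∑ i, h.eigenvalues i * Real.logb 2 (h.eigenvalues i) else 0

/-- Matrix base-2 logarithm on the support of a Hermitian matrix (junk `0` if not Hermitian). -/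
noncomputable def mlog [Fintype ι] (A : Matrix ι ι ℂ) : Matrix ι ι ℂ := by
  classical exact
    if h : A.IsHermitian then
      (h.eigenvectorUnitary : Matrix ι ι ℂ) *
        Matrix.diagonal (fun i => (Real.logb 2 (h.eigenvalues i) : ℂ)) *
        (h.eigenvectorUnitary : Matrix ι ι ℂ)ᴴ
    else 0

/-- Square root of the Moore–Penrose pseudoinverse of a Hermitian PSD matrix
(junk `0` if not Hermitian). -/
noncomputable def pinvSqrt [Fintype ι] (A : Matrix ι ι ℂ) : Matrix ι ι ℂ := by
  classical exact
    if h : A.IsHermitian then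
      (h.eigenvectorUnitary : Matrix ι ι ℂ) *
        Matrix.diagonal (fun i => ((Real.sqrt (h.eigenvalues i))⁻¹ : ℂ)) *
        (h.eigenvectorUnitary : Matrix ι ι ℂ)ᴴ
    else 0

/-- Relative entropy `D(ρ‖σ)`, equal to `tr(ρ(log₂ρ - log₂σ))/tr ρ` when the support of
`ρ` is contained in the support of `σ`, and `+∞` otherwise. -/
noncomputable def relEnt [Fintype ι] (ρ σ : Matrix ι ι ℂ) : EReal := by
  classical exact
    if ∀ v : ι → ℂ, σ *ᵥ v = 0 → ρ *ᵥ v = 0 then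
      (((ρ * (mlog ρ - mlog σ)).trace.re / ρ.trace.re : ℝ) : EReal)
    else ⊤

/-- `n`-fold tensor power of a matrix. -/
def tpow (A : Matrix ι ι ℂ) (n : ℕ) : Matrix (Fin n → ι) (Fin n → ι) ℂ :=
  Matrix.of fun x y => ∏ i, A (x i) (y i)

/-- Permutation invariance of a matrix on an `n`-fold tensor power space. -/
def permInv {n : ℕ} (ρ : Matrix (Fin n → ι) (Fin n → ι) ℂ) : Prop :=
  ∀ π : Equiv.Perm (Fin n), ∀ x y, ρ (x ∘ π) (y ∘ π) = ρ x y

/-- Rank-one projector `|φ⟩⟨φ|`. -/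
def vecOuter (φ : ι → ℂ) : Matrix ι ι ℂ :=
  Matrix.of fun i j => φ i * star (φ j)

variable {A B C D E : Type*}

/-- Partial trace over the second factor. -/
def ptr2 [Fintype E] (M : Matrix (D × E) (D × E) ℂ) : Matrix D D ℂ :=
  Matrix.of fun d d' => ∑ e, M (d, e) (d', e)

/-- Partial trace over the `n` copies of `E` of a matrix on `(D ⊗ E)^⊗n`. -/
def ptrPow [Fintype E] {n : ℕ} (M : Matrix (Fin n → D × E) (Fin n → D × E) ℂ) :
    Matrix (Fin n → D) (Fin n → D) ℂ :=
  Matrix.of fun x y => ∑ e : Fin n → E, M (fun i => (x i, e i)) (fun i => (y i, e i))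

/-- Marginal `ρ_AB` of a tripartite matrix. -/
def margAB [Fintype C] (ρ : Matrix (A × B × C) (A × B × C) ℂ) : Matrix (A × B) (A × B) ℂ :=
  Matrix.of fun x y => ∑ c, ρ (x.1, x.2, c) (y.1, y.2, c)

/-- Marginal `ρ_BC` of a tripartite matrix. -/
def margBC [Fintype A] (ρ : Matrix (A × B × C) (A × B × C) ℂ) : Matrix (B × C) (B × C) ℂ :=
  Matrix.of fun x y => ∑ a, ρ (a, x.1, x.2) (a, y.1, y.2)

/-- Marginal `ρ_B` of a tripartite matrix. -/
def margB [Fintype A] [Fintype C] (ρ : Matrix (A × B × C) (A × B × C) ℂ) : Matrix B B ℂ :=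
  Matrix.of fun b b' => ∑ a, ∑ c, ρ (a, b, c) (a, b', c)

/-- Conditional mutual information `I(A:C|B)_ρ = H(ρ_AB) + H(ρ_BC) - H(ρ_B) - H(ρ_ABC)`. -/
noncomputable def cmi [Fintype A] [Fintype B] [Fintype C]
    (ρ : Matrix (A × B × C) (A × B × C) ℂ) : ℝ :=
  vnEntropy (margAB ρ) + vnEntropy (margBC ρ) - vnEntropy (margB ρ) - vnEntropy ρ

/-- Application of `I_A ⊗ T` to a matrix on `A ⊗ B`, for `T` a map from matrices over `B`
to matrices over `B ⊗ C`. -/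
def extT (T : Matrix B B ℂ → Matrix (B × C) (B × C) ℂ)
    (ρ : Matrix (A × B) (A × B) ℂ) : Matrix (A × B × C) (A × B × C) ℂ :=
  Matrix.of fun x y => T (Matrix.of fun b b' => ρ (x.1, b) (y.1, b')) x.2 y.2

/-- `M ⊗ id` on `B ⊗ C`. -/
def kronId (M : Matrix B B ℂ) : Matrix (B × C) (B × C) ℂ := by
  classical exact Matrix.of fun x y => if x.2 = y.2 then M x.1 y.1 else 0

end QMarkov

namespace QMarkov
variable {A B C : Type*}

/-- Marginal on the first and third factors of a tripartite matrix. -/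
def marg13 [Fintype B] (ρ : Matrix (A × B × C) (A × B × C) ℂ) : Matrix (A × C) (A × C) ℂ :=
  Matrix.of fun x y => ∑ b, ρ (x.1, b, x.2) (y.1, b, y.2)

/-- Marginal on the third factor of a tripartite matrix. -/
def marg3 [Fintype A] [Fintype B] (ρ : Matrix (A × B × C) (A × B × C) ℂ) : Matrix C C ℂ :=
  Matrix.of fun c c' => ∑ a, ∑ b, ρ (a, b, c) (a, b, c')

/-- Conditional mutual information `I(first : second | third)` of a tripartite matrix, i.e.
for `ρ` on `A ⊗ C ⊗ E` this is `I(A:C|E)_ρ = H(ρ_AE) + H(ρ_CE) - H(ρ_E) - H(ρ_ACE)`. -/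
noncomputable def cmi13 [Fintype A] [Fintype B] [Fintype C]
    (ρ : Matrix (A × B × C) (A × B × C) ℂ) : ℝ :=
  vnEntropy (marg13 ρ) + vnEntropy (margBC ρ) - vnEntropy (marg3 ρ) - vnEntropy ρ

end QMarkov
namespace QMarkov

/-- The set defining the generalized relative entropy: values `tr(Qσ)/ε` over tests
`0 ≤ Q ≤ id` with `tr(Qρ) ≥ ε`. -/
def DHset {ι : Type*} [Fintype ι] [DecidableEq ι] (ε : ℝ) (ρ σ : Matrix ι ι ℂ) : Set ℝ :=
  {x | ∃ Q : Matrix ι ι ℂ, Q.PosSemidef ∧ (1 - Q).PosSemidef ∧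
    ε ≤ (Q * ρ).trace.re ∧ x = (Q * σ).trace.re / ε}

/-- Generalized relative entropy `D_H^ε(ρ‖σ)`, defined by `2^{-D_H^ε} = inf tr(Qσ)/ε`
(and `⊤` when the infimum is `0`, corresponding to `2^{-D} = 0`). -/
noncomputable def DH {ι : Type*} [Fintype ι] [DecidableEq ι] (ε : ℝ)
    (ρ σ : Matrix ι ι ℂ) : EReal := by
  classical exact
    if 0 < sInf (DHset ε ρ σ) then ((-Real.logb 2 (sInf (DHset ε ρ σ)) : ℝ) : EReal) else ⊤

/-- The set defining the smooth max-relative entropy: scalars `μ ≥ 0` with `μ ρ̄ ≤ σ` for some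
subnormalized PSD `ρ̄` with `1 - F(ρ̄,ρ)² ≤ ε²`. -/
def DmaxSet {ι : Type*} [Fintype ι] (ε : ℝ) (ρ σ : Matrix ι ι ℂ) : Set ℝ :=
  {m | 0 ≤ m ∧ ∃ ρbar : Matrix ι ι ℂ, ρbar.PosSemidef ∧ ρbar.trace.re ≤ 1 ∧
    (σ - m • ρbar).PosSemidef ∧ 1 - fid ρbar ρ ^ 2 ≤ ε ^ 2}

/-- Smooth max-relative entropy `D_max^ε(ρ‖σ)`, defined by `2^{-D_max^ε} = sup` of the above
(and `⊤` when the supremum is `0`, corresponding to `2^{-D} = 0`). -/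
noncomputable def Dmax {ι : Type*} [Fintype ι] (ε : ℝ) (ρ σ : Matrix ι ι ℂ) : EReal := by
  classical exact
    if 0 < sSup (DmaxSet ε ρ σ) then ((-Real.logb 2 (sSup (DmaxSet ε ρ σ)) : ℝ) : EReal) else ⊤

section AuxProof
variable {ι : Type*} [Fintype ι] [DecidableEq ι]

lemma matSqrt_eq {A : Matrix ι ι ℂ} (hA : A.PosSemidef) : matSqrt A =
    (hA.1.eigenvectorUnitary : Matrix ι ι ℂ) *
        Matrix.diagonal ((↑) ∘ Real.sqrt ∘ hA.1.eigenvalues) *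
        (star hA.1.eigenvectorUnitary : Matrix ι ι ℂ) := by
  unfold matSqrt
  rw [dif_pos hA]
  convert rfl

lemma matSqrt_posSemidef {A : Matrix ι ι ℂ} (hA : A.PosSemidef) :
    (matSqrt A).PosSemidef := by
  rw [matSqrt_eq hA]
  have hD : (Matrix.diagonal (((↑) ∘ Real.sqrt ∘ hA.1.eigenvalues) : ι → ℂ)).PosSemidef := by
    rw [Matrix.posSemidef_diagonal_iff]
    intro i
    simp only [Function.comp_apply]
    exact_mod_cast Real.sqrt_nonneg _
  exact hD.mul_mul_conjTranspose_same _

lemma matSqrt_mul_self {A : Matrix ι ι ℂ} (hA : A.PosSemidef) :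
    matSqrt A * matSqrt A = A := by
  rw [matSqrt_eq hA]
  have hU : (star hA.1.eigenvectorUnitary : Matrix ι ι ℂ) *
      (hA.1.eigenvectorUnitary : Matrix ι ι ℂ) = 1 :=
    Matrix.mem_unitaryGroup_iff'.mp hA.1.eigenvectorUnitary.2
  conv_rhs => rw [hA.1.spectral_theorem, Unitary.conjStarAlgAut_apply]
  rw [show ∀ (X Y Z : Matrix ι ι ℂ), X * Y * Z * (X * Y * Z) = X * (Y * (Z * X) * Y) * Z from
    fun X Y Z => by simp only [Matrix.mul_assoc]]
  rw [hU, Matrix.mul_one, Matrix.diagonal_mul_diagonal]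
  congr 1; congr 1; congr 1
  funext i
  simp only [Function.comp_apply]
  rw [← Complex.ofReal_mul, Real.mul_self_sqrt (hA.eigenvalues_nonneg i)]
  rfl

lemma matSqrt_herm {A : Matrix ι ι ℂ} (hA : A.PosSemidef) :
    (matSqrt A)ᴴ = matSqrt A := (matSqrt_posSemidef hA).1

lemma trace_re_nonneg {A : Matrix ι ι ℂ} (hA : A.PosSemidef) : 0 ≤ A.trace.re := by
  rw [Matrix.trace, Complex.re_sum]
  refine Finset.sum_nonneg fun i _ => ?_
  have := hA.re_dotProduct_nonneg (Pi.single i 1)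
  simpa [dotProduct, Matrix.mulVec_single, Pi.single_apply, Finset.sum_ite_eq,
    RCLike.re] using this

lemma trace_mul_re_nonneg {A B : Matrix ι ι ℂ} (hA : A.PosSemidef) (hB : B.PosSemidef) :
    0 ≤ (A * B).trace.re := by
  obtain ⟨C, hC⟩ : ∃ C, B = Cᴴ * C := ⟨matSqrt B, by rw [matSqrt_herm hB, matSqrt_mul_self hB]⟩
  have h1 : (A * B).trace = (C * A * Cᴴ).trace := by
    rw [hC, ← Matrix.mul_assoc, Matrix.trace_mul_cycle]
  rw [h1]
  exact trace_re_nonneg (hA.mul_mul_conjTranspose_same C)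

lemma traceNorm_nonneg (A : Matrix ι ι ℂ) : 0 ≤ traceNorm A :=
  trace_re_nonneg (matSqrt_posSemidef (Matrix.posSemidef_conjTranspose_mul_self A))

/-- trace monotonicity against a sub-identity positive matrix -/
lemma trace_mul_le_self {A P : Matrix ι ι ℂ} (hA : A.PosSemidef) (hP : (1 - P).PosSemidef) :
    (A * P).trace.re ≤ A.trace.re := by
  have h : A.trace.re - (A * P).trace.re = (A * (1 - P)).trace.re := by
    rw [Matrix.mul_sub, Matrix.mul_one, Matrix.trace_sub, Complex.sub_re]
  nlinarith [trace_mul_re_nonneg hA hP]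

/-- Cauchy–Schwarz for the Frobenius inner product. -/
lemma trace_CS (X Y : Matrix ι ι ℂ) :
    ((Xᴴ * Y).trace.re) ≤ Real.sqrt ((Xᴴ * X).trace.re) * Real.sqrt ((Yᴴ * Y).trace.re) := by
  classical
  let u : EuclideanSpace ℂ (ι × ι) := WithLp.toLp 2 (fun p : ι × ι => X p.2 p.1)
  let v : EuclideanSpace ℂ (ι × ι) := WithLp.toLp 2 (fun p : ι × ι => Y p.2 p.1)
  have key : ∀ Z W : Matrix ι ι ℂ, (Zᴴ * W).trace =
      ∑ p : ι × ι, (starRingEnd ℂ) (Z p.2 p.1) * W p.2 p.1 := by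
    intro Z W
    rw [Fintype.sum_prod_type]
    simp only [Matrix.trace, Matrix.diag, Matrix.mul_apply, Matrix.conjTranspose_apply]
    rfl
  have hinner : (Xᴴ * Y).trace = inner (𝕜 := ℂ) u v := by
    rw [key, PiLp.inner_apply]
    refine Finset.sum_congr rfl fun p _ => ?_
    show _ = inner ℂ (X p.2 p.1) (Y p.2 p.1)
    simp [RCLike.inner_apply, mul_comm]
  have hnorm : ∀ Z : Matrix ι ι ℂ, (Zᴴ * Z).trace.re =
      ∑ p : ι × ι, ‖Z p.2 p.1‖ ^ 2 := by
    intro Z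
    rw [key, Complex.re_sum]
    refine Finset.sum_congr rfl fun p _ => ?_
    rw [Complex.sq_norm, ← Complex.normSq_eq_conj_mul_self]
    simp
  have hXn : Real.sqrt ((Xᴴ * X).trace.re) = ‖u‖ := by
    rw [EuclideanSpace.norm_eq, hnorm]
  have hYn : Real.sqrt ((Yᴴ * Y).trace.re) = ‖v‖ := by
    rw [EuclideanSpace.norm_eq, hnorm]
  rw [hinner, hXn, hYn]
  calc (inner (𝕜 := ℂ) u v).re ≤ ‖(inner (𝕜 := ℂ) u v)‖ := Complex.re_le_norm _
    _ ≤ ‖u‖ * ‖v‖ := norm_inner_le_norm u v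


lemma inv_sqrt_mul {x : ℝ} (hx : 0 ≤ x) : (Real.sqrt x)⁻¹ * x = Real.sqrt x := by
  rcases eq_or_lt_of_le hx with h | h
  · simp [← h]
  · have hs : 0 < Real.sqrt x := Real.sqrt_pos.mpr h
    have hx2 : Real.sqrt x * Real.sqrt x = x := Real.mul_self_sqrt hx
    field_simp
    rw [Real.sq_sqrt hx]

lemma inv_sqrt_mul3 {x : ℝ} (hx : 0 ≤ x) :
    (Real.sqrt x)⁻¹ * ((Real.sqrt x)⁻¹ * x * (Real.sqrt x)⁻¹) = (Real.sqrt x)⁻¹ := by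
  rcases eq_or_lt_of_le hx with h | h
  · simp [← h]
  · have hs : 0 < Real.sqrt x := Real.sqrt_pos.mpr h
    have hx2 : Real.sqrt x * Real.sqrt x = x := Real.mul_self_sqrt hx
    field_simp
    rw [Real.sq_sqrt hx]

/-- One half of the measurement bound on the fidelity. -/
lemma step_bound {B C W V Q' : Matrix ι ι ℂ} (hBh : Bᴴ = B) (hCh : Cᴴ = C)
    (hQ' : Q'.PosSemidef) (hP : (1 - W * Wᴴ).PosSemidef) (hVV' : V * Vᴴ = 1) :
    (Wᴴ * (B * (Q' * (C * V)))).trace.re ≤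
      Real.sqrt ((Q' * (B * B)).trace.re) * Real.sqrt ((Q' * (C * C)).trace.re) := by
  classical
  set R := matSqrt Q' with hRdef
  have hRh : Rᴴ = R := matSqrt_herm hQ'
  have hRR : R * R = Q' := matSqrt_mul_self hQ'
  set X := R * (B * W) with hX
  set Y := R * (C * V) with hY
  have hXY : Xᴴ * Y = Wᴴ * (B * (Q' * (C * V))) := by
    calc Xᴴ * Y = Wᴴ * (B * ((R * R) * (C * V))) := by
          simp only [hX, hY, Matrix.conjTranspose_mul, hBh, hRh, Matrix.mul_assoc]
      _ = _ := by rw [hRR]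
  have hA0 : (B * (Q' * B)).PosSemidef := by
    have h := Matrix.posSemidef_conjTranspose_mul_self (R * B)
    have he : (R * B)ᴴ * (R * B) = B * (Q' * B) := by
      calc (R * B)ᴴ * (R * B) = B * ((R * R) * B) := by
            simp only [Matrix.conjTranspose_mul, hBh, hRh, Matrix.mul_assoc]
        _ = _ := by rw [hRR]
    rwa [he] at h
  have hXX : (Xᴴ * X).trace = ((B * (Q' * B)) * (W * Wᴴ)).trace := by
    have he : Xᴴ * X = Wᴴ * ((B * (Q' * B)) * W) := by
      calc Xᴴ * X = Wᴴ * (B * ((R * R) * (B * W))) := by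
            simp only [hX, Matrix.conjTranspose_mul, hBh, hRh, Matrix.mul_assoc]
        _ = _ := by rw [hRR]; simp only [Matrix.mul_assoc]
    rw [he, Matrix.trace_mul_comm, Matrix.mul_assoc]
  have hXXle : (Xᴴ * X).trace.re ≤ ((Q' * (B * B))).trace.re := by
    rw [hXX]
    have h1 := trace_mul_le_self hA0 hP
    have h2 : (B * (Q' * B)).trace = (Q' * (B * B)).trace := by
      rw [Matrix.trace_mul_comm, Matrix.mul_assoc]
    calc ((B * (Q' * B)) * (W * Wᴴ)).trace.re ≤ (B * (Q' * B)).trace.re := h1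
      _ = _ := by rw [h2]
  have hYY : (Yᴴ * Y).trace = (Q' * (C * C)).trace := by
    have he : Yᴴ * Y = Vᴴ * ((C * (Q' * C)) * V) := by
      calc Yᴴ * Y = Vᴴ * (C * ((R * R) * (C * V))) := by
            simp only [hY, Matrix.conjTranspose_mul, hCh, hRh, Matrix.mul_assoc]
        _ = _ := by rw [hRR]; simp only [Matrix.mul_assoc]
    rw [he, Matrix.trace_mul_comm, Matrix.mul_assoc, hVV', Matrix.mul_one,
      Matrix.trace_mul_comm, Matrix.mul_assoc]
  have hCS := trace_CS X Y
  rw [hXY] at hCS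
  refine le_trans hCS ?_
  rw [hYY]
  exact mul_le_mul_of_nonneg_right (Real.sqrt_le_sqrt hXXle) (Real.sqrt_nonneg _)

/-- Fidelity measurement bound:
`F(ρb, ρ) ≤ √(tr(Q ρb) tr(Q ρ)) + √(tr((1-Q) ρb) tr((1-Q) ρ))`. -/
lemma fid_le_measure {ρb ρ Q : Matrix ι ι ℂ} (hρb : ρb.PosSemidef) (hρ : ρ.PosSemidef)
    (hQ : Q.PosSemidef) (hQ1 : (1 - Q).PosSemidef) :
    fid ρb ρ ≤ Real.sqrt ((Q * ρb).trace.re * (Q * ρ).trace.re)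
      + Real.sqrt (((1 - Q) * ρb).trace.re * ((1 - Q) * ρ).trace.re) := by
  classical
  set B := matSqrt ρb with hBdef
  set C := matSqrt ρ with hCdef
  have hBh : Bᴴ = B := matSqrt_herm hρb
  have hCh : Cᴴ = C := matSqrt_herm hρ
  have hBB : B * B = ρb := matSqrt_mul_self hρb
  have hCC : C * C = ρ := matSqrt_mul_self hρ
  set M := B * C with hM
  have hH : (Mᴴ * M).PosSemidef := Matrix.posSemidef_conjTranspose_mul_self M
  set g := hH.1.eigenvalues with hgdef
  have hg : ∀ i, 0 ≤ g i := fun i => hH.eigenvalues_nonneg i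
  set V : Matrix ι ι ℂ := (hH.1.eigenvectorUnitary : Matrix ι ι ℂ) with hVdef
  have hVV : Vᴴ * V = 1 := by
    rw [← Matrix.star_eq_conjTranspose]
    exact Matrix.mem_unitaryGroup_iff'.mp hH.1.eigenvectorUnitary.2
  have hVV' : V * Vᴴ = 1 := by
    rw [← Matrix.star_eq_conjTranspose]
    exact Matrix.mem_unitaryGroup_iff.mp hH.1.eigenvectorUnitary.2
  set Dg : Matrix ι ι ℂ := Matrix.diagonal (fun i => (g i : ℂ)) with hDgdef
  have hspec : Mᴴ * M = V * Dg * Vᴴ := by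
    have := hH.1.spectral_theorem
    rw [← Matrix.star_eq_conjTranspose]
    exact this
  have hMMV : (Mᴴ * M) * V = V * Dg := by
    rw [hspec, Matrix.mul_assoc, hVV, Matrix.mul_one]
  set Dsi : Matrix ι ι ℂ :=
    Matrix.diagonal (fun i => (((Real.sqrt (g i))⁻¹ : ℝ) : ℂ)) with hDsidef
  have hDsiH : Dsiᴴ = Dsi := by
    rw [hDsidef, Matrix.diagonal_conjTranspose]
    refine congrArg Matrix.diagonal ?_
    funext i
    simp [Pi.star_apply, Complex.star_def, map_inv₀, Complex.conj_ofReal]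
  set W := M * (V * Dsi) with hWdef
  have hWH : Wᴴ = Dsi * (Vᴴ * Mᴴ) := by
    rw [hWdef, Matrix.conjTranspose_mul, Matrix.conjTranspose_mul, hDsiH, Matrix.mul_assoc]
  -- the key product
  have hWMV : Wᴴ * (M * V) = Dsi * Dg := by
    calc Wᴴ * (M * V) = Dsi * (Vᴴ * ((Mᴴ * M) * V)) := by
          rw [hWH]; simp only [Matrix.mul_assoc]
      _ = Dsi * ((Vᴴ * V) * Dg) := by rw [hMMV, Matrix.mul_assoc]
      _ = Dsi * Dg := by rw [hVV, Matrix.one_mul]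
  -- Wᴴ W and the projection
  have hWW : Wᴴ * W = Dsi * (Dg * Dsi) := by
    calc Wᴴ * W = Dsi * (Vᴴ * ((Mᴴ * M) * (V * Dsi))) := by
          rw [hWH, hWdef]; simp only [Matrix.mul_assoc]
      _ = Dsi * (Vᴴ * (((Mᴴ * M) * V) * Dsi)) := by simp only [Matrix.mul_assoc]
      _ = Dsi * ((Vᴴ * V) * (Dg * Dsi)) := by rw [hMMV]; simp only [Matrix.mul_assoc]
      _ = _ := by rw [hVV, Matrix.one_mul]
  have hWprojaux : Dsi * (Dsi * (Dg * Dsi)) = Dsi := by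
    rw [hDsidef, hDgdef]
    simp only [Matrix.diagonal_mul_diagonal]
    refine congrArg Matrix.diagonal ?_
    funext i
    have hx := hg i
    rcases eq_or_lt_of_le hx with h | h
    · simp [← h]
    · have hs : 0 < Real.sqrt (g i) := Real.sqrt_pos.mpr h
      have hx2 : Real.sqrt (g i) * Real.sqrt (g i) = g i := Real.mul_self_sqrt hx
      have hsne : ((Real.sqrt (g i) : ℝ) : ℂ) ≠ 0 := by exact_mod_cast hs.ne'
      field_simp
      have hr : g i * Real.sqrt (g i) = Real.sqrt (g i) * (Real.sqrt (g i) * Real.sqrt (g i)) := by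
        rw [hx2]; ring
      rw [← Complex.ofReal_pow, ← Complex.ofReal_mul]
      norm_cast
      rw [div_pow, one_pow, Real.sq_sqrt hx]
      exact one_div_mul_cancel h.ne'
  have hWWW : W * (Wᴴ * W) = W := by
    rw [hWW, hWdef]
    calc (M * (V * Dsi)) * (Dsi * (Dg * Dsi)) = M * (V * (Dsi * (Dsi * (Dg * Dsi)))) := by
          simp only [Matrix.mul_assoc]
      _ = M * (V * Dsi) := by rw [hWprojaux]
  have hProj : (1 - W * Wᴴ).PosSemidef := by
    set P := W * Wᴴ with hPdef
    have hPP : P * P = P := by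
      calc P * P = (W * (Wᴴ * W)) * Wᴴ := by rw [hPdef]; simp only [Matrix.mul_assoc]
        _ = P := by rw [hWWW]
    have hPh : Pᴴ = P := by rw [hPdef, Matrix.conjTranspose_mul, Matrix.conjTranspose_conjTranspose]
    have h2 : (1 - P)ᴴ * (1 - P) = 1 - P := by
      rw [Matrix.conjTranspose_sub, Matrix.conjTranspose_one, hPh]
      simp only [Matrix.sub_mul, Matrix.mul_sub, Matrix.mul_one, Matrix.one_mul, hPP]
      abel
    have := Matrix.posSemidef_conjTranspose_mul_self (1 - P)
    rwa [h2] at this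
  -- value of the fidelity
  have hfid : fid ρb ρ = (Wᴴ * (M * V)).trace.re := by
    have hsqrt : matSqrt (Mᴴ * M) = V * Matrix.diagonal (fun i => ((Real.sqrt (g i) : ℝ) : ℂ)) * Vᴴ := by
      rw [matSqrt_eq hH]
      rfl
    have htr : (matSqrt (Mᴴ * M)).trace = ∑ i, ((Real.sqrt (g i) : ℝ) : ℂ) := by
      rw [hsqrt, Matrix.trace_mul_cycle, hVV, Matrix.one_mul, Matrix.trace_diagonal]
    have htr2 : (Wᴴ * (M * V)).trace = ∑ i, ((Real.sqrt (g i) : ℝ) : ℂ) := by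
      rw [hWMV, hDsidef, hDgdef, Matrix.diagonal_mul_diagonal, Matrix.trace_diagonal]
      refine Finset.sum_congr rfl fun i _ => ?_
      have hx := hg i
      rcases eq_or_lt_of_le hx with h | h
      · simp [← h]
      · have hs : 0 < Real.sqrt (g i) := Real.sqrt_pos.mpr h
        have hx2 : Real.sqrt (g i) * Real.sqrt (g i) = g i := Real.mul_self_sqrt hx
        have hsne : ((Real.sqrt (g i) : ℝ) : ℂ) ≠ 0 := by exact_mod_cast hs.ne'
        field_simp
        rw [← Complex.ofReal_mul]
        congr 1
        rw [one_div, inv_mul_eq_div, div_eq_iff hs.ne']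
        exact hx2.symm
    show traceNorm M = _
    rw [traceNorm, htr, htr2]
  -- split M V by the measurement
  have hsplit : M * V = B * (Q * (C * V)) + B * ((1 - Q) * (C * V)) := by
    have h1 : Q + (1 - Q) = 1 := by abel
    calc M * V = B * ((Q + (1 - Q)) * (C * V)) := by
          rw [h1, Matrix.one_mul, hM]; simp only [Matrix.mul_assoc]
      _ = _ := by rw [Matrix.add_mul, Matrix.mul_add]
  have hb1 := step_bound (W := W) (V := V) hBh hCh hQ hProj hVV'
  have hb2 := step_bound (W := W) (V := V) hBh hCh hQ1 hProj hVV'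
  rw [hBB, hCC] at hb1 hb2
  have hsum : fid ρb ρ = (Wᴴ * (B * (Q * (C * V)))).trace.re
      + (Wᴴ * (B * ((1 - Q) * (C * V)))).trace.re := by
    rw [hfid, hsplit, Matrix.mul_add, Matrix.trace_add, Complex.add_re]
  rw [hsum]
  have hs1 : Real.sqrt ((Q * ρb).trace.re) * Real.sqrt ((Q * ρ).trace.re)
      = Real.sqrt ((Q * ρb).trace.re * (Q * ρ).trace.re) :=
    (Real.sqrt_mul (trace_mul_re_nonneg hQ hρb) _).symm
  have hs2 : Real.sqrt (((1 - Q) * ρb).trace.re) * Real.sqrt (((1 - Q) * ρ).trace.re)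
      = Real.sqrt (((1 - Q) * ρb).trace.re * ((1 - Q) * ρ).trace.re) :=
    (Real.sqrt_mul (trace_mul_re_nonneg hQ1 hρb) _).symm
  rw [← hs1, ← hs2]
  exact add_le_add hb1 hb2

lemma fid_nonneg (a b : Matrix ι ι ℂ) : 0 ≤ fid a b := traceNorm_nonneg _

set_option maxHeartbeats 2000000 in
/-- The key estimate: for any `m` in the `Dmax` set and any test `Q` accepting `ρ`
with probability at least `ε`, we have `m (ε - ε') ≤ tr(Q σ)`. -/

lemma key_ineq {ρ σ Q : Matrix ι ι ℂ} (hρ : ρ.PosSemidef) (hρtr : ρ.trace = 1)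
    {ε ε' m : ℝ} (hε' : 0 ≤ ε') (hm : m ∈ DmaxSet ε' ρ σ)
    (hQ : Q.PosSemidef) (hQ1 : (1 - Q).PosSemidef) (hQρ : ε ≤ (Q * ρ).trace.re) :
    m * (ε - ε') ≤ (Q * σ).trace.re := by
  obtain ⟨hm0, ρb, hρb, ht, hsub, hfcond⟩ := hm
  set p := (Q * ρ).trace.re with hp
  set q := (Q * ρb).trace.re with hq
  have hp0 : 0 ≤ p := trace_mul_re_nonneg hQ hρ
  have hq0 : 0 ≤ q := trace_mul_re_nonneg hQ hρb
  have hp1 : p ≤ 1 := by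
    have h := trace_mul_le_self hρ hQ1
    rw [Matrix.trace_mul_comm] at h
    calc p ≤ ρ.trace.re := h
      _ = 1 := by rw [hρtr]; simp
  have hqt : q ≤ ρb.trace.re := by
    have h := trace_mul_le_self hρb hQ1
    rwa [Matrix.trace_mul_comm] at h
  have hq1 : q ≤ 1 := hqt.trans ht
  have h1p : ((1 - Q) * ρ).trace.re = 1 - p := by
    rw [Matrix.sub_mul, Matrix.one_mul, Matrix.trace_sub, Complex.sub_re, hρtr]
    simp [hp]
  have h1q : ((1 - Q) * ρb).trace.re = ρb.trace.re - q := by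
    rw [Matrix.sub_mul, Matrix.one_mul, Matrix.trace_sub, Complex.sub_re]
  -- fidelity bound
  have hF := fid_le_measure hρb hρ hQ hQ1
  rw [h1p, h1q] at hF
  set F := fid ρb ρ with hFdef
  have hF0 : 0 ≤ F := fid_nonneg _ _
  have hF2 : 1 - ε' ^ 2 ≤ F ^ 2 := by linarith
  -- replace (tr ρb - q) by (1 - q)
  have hstep : F ≤ Real.sqrt (q * p) + Real.sqrt ((1 - q) * (1 - p)) := by
    refine hF.trans (add_le_add_right (Real.sqrt_le_sqrt ?_) _)
    nlinarith
  set a := Real.sqrt (q * p) with hadef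
  set b := Real.sqrt ((1 - q) * (1 - p)) with hbdef
  have ha0 : 0 ≤ a := Real.sqrt_nonneg _
  have hb0 : 0 ≤ b := Real.sqrt_nonneg _
  have ha2 : a ^ 2 = q * p := Real.sq_sqrt (by nlinarith)
  have hb2 : b ^ 2 = (1 - q) * (1 - p) := Real.sq_sqrt (by nlinarith)
  set u := Real.sqrt (q * (1 - q)) with hudef
  set v := Real.sqrt (p * (1 - p)) with hvdef
  have hu2 : u ^ 2 = q * (1 - q) := Real.sq_sqrt (by nlinarith)
  have hv2 : v ^ 2 = p * (1 - p) := Real.sq_sqrt (by nlinarith)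
  have hab : a * b = u * v := by
    rw [hadef, hbdef, hudef, hvdef, ← Real.sqrt_mul (by nlinarith), ← Real.sqrt_mul (by nlinarith)]
    congr 1
    ring
  have hsq : (p - q) ^ 2 ≤ ε' ^ 2 := by
    nlinarith [sq_nonneg (u - v), sq_nonneg (a + b)]
  have hpq : p - q ≤ ε' := by nlinarith [sq_nonneg (p - q + ε')]
  -- positivity step
  have hσq : m * q ≤ (Q * σ).trace.re := by
    have h0 := trace_mul_re_nonneg hQ hsub
    have he : (Q * (σ - m • ρb)).trace.re = (Q * σ).trace.re - m * q := by
      rw [Matrix.mul_sub, Matrix.mul_smul, Matrix.trace_sub, Matrix.trace_smul,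
        Complex.sub_re, Complex.smul_re]
      rfl
    rw [he] at h0
    linarith
  have hqe : ε - ε' ≤ q := by linarith
  calc m * (ε - ε') ≤ m * q := by nlinarith
    _ ≤ _ := hσq

end AuxProof

/-- `D_H^ε(ρ‖σ) ≤ D_max^{ε'}(ρ‖σ) + log₂(ε/(ε-ε'))`. -/
theorem DH_le_Dmax
    {ι : Type*} [Fintype ι] [DecidableEq ι]
    (ρ σ : Matrix ι ι ℂ) (hρ : ρ.PosSemidef) (hρtr : ρ.trace = 1) (hσ : σ.PosSemidef)
    (ε ε' : ℝ) (hε' : 0 ≤ ε') (hεε' : ε' < ε) (hε1 : ε ≤ 1) :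
    DH ε ρ σ ≤ Dmax ε' ρ σ + ((Real.logb 2 (ε / (ε - ε')) : ℝ) : EReal) := by
  classical
  have hε : 0 < ε := lt_of_le_of_lt hε' hεε'
  have hεd : 0 < ε - ε' := sub_pos.mpr hεε'
  set S := sSup (DmaxSet ε' ρ σ) with hSdef
  by_cases hS : 0 < S
  · -- main case
    have hne : (DmaxSet ε' ρ σ).Nonempty := by
      by_contra h
      rw [Set.not_nonempty_iff_eq_empty] at h
      rw [hSdef, h, Real.sSup_empty] at hS
      exact lt_irrefl 0 hS
    set c := S * (ε - ε') / ε with hcdef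
    have hc : 0 < c := div_pos (mul_pos hS hεd) hε
    have hDHne : (DHset ε ρ σ).Nonempty := by
      refine ⟨(1 * σ).trace.re / ε, 1, Matrix.PosDef.one.posSemidef, ?_, ?_, rfl⟩
      · rw [sub_self]
        exact Matrix.PosSemidef.zero
      · rw [Matrix.one_mul, hρtr]
        simpa using hε1
    have hlb : ∀ x ∈ DHset ε ρ σ, c ≤ x := by
      rintro x ⟨Q, hQ, hQ1, hQρ, rfl⟩
      have hub : ∀ m ∈ DmaxSet ε' ρ σ, m ≤ (Q * σ).trace.re / (ε - ε') := by
        intro m hm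
        have hk := key_ineq hρ hρtr hε' hm hQ hQ1 hQρ
        rw [le_div_iff₀ hεd]
        linarith
      have hSle : S ≤ (Q * σ).trace.re / (ε - ε') := csSup_le hne hub
      have h2 : S * (ε - ε') ≤ (Q * σ).trace.re := by
        rw [← le_div_iff₀ hεd]
        exact hSle
      rw [hcdef]
      exact (div_le_div_iff_of_pos_right hε).mpr h2
    have hI : c ≤ sInf (DHset ε ρ σ) := le_csInf hDHne hlb
    have hIpos : 0 < sInf (DHset ε ρ σ) := lt_of_lt_of_le hc hI
    unfold DH Dmax
    rw [if_pos hIpos, if_pos hS]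
    rw [← EReal.coe_add, EReal.coe_le_coe_iff]
    have hεr : 0 < ε / (ε - ε') := div_pos hε hεd
    have hlog1 : Real.logb 2 c ≤ Real.logb 2 (sInf (DHset ε ρ σ)) :=
      Real.logb_le_logb_of_le one_lt_two hc hI
    have hceq : Real.logb 2 c = Real.logb 2 S - Real.logb 2 (ε / (ε - ε')) := by
      rw [hcdef]
      have he : S * (ε - ε') / ε = S / (ε / (ε - ε')) := by
        field_simp
      rw [he, Real.logb_div hS.ne' hεr.ne']
    linarith
  · -- Dmax is ⊤
    unfold Dmax
    rw [if_neg hS, EReal.top_add_coe]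
    exact le_top


end QMarkov
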